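/- Fix R_A > 0, T > 0, an invertible 2×2 matrix Σ, K = diag(k₁,k₂) with k₁,k₂ > 0, appetence parameters γ₁, γ₂ ∈ [0,1], and Γ := (1+γ₁−γ₂, 1+γ₂−γ₁)ᵀ. Set M := (I + 2R_A K⁻²ΣΣᵀ)⁻¹ and λ̃ := Γ·(K²MΓ) − (5R_A/4)‖ΣᵀMΓ‖² − (3/4)‖KMΓ‖². Then v¹(t,x) := λ̃(T−t) + (1+γ₁)x₁ − γ₁x₂ satisfies −∂ₜv¹ − (1/2)Tr(ΣΣᵀ∇²ₓv¹) − (1/2)Γ·(K²MΓ) + (R_A/4)‖ΣᵀMΓ‖² + (1/4)‖KMΓ‖² = 0 with v¹(T,x) = (1+γ₁)x₁ − γ₁x₂. -/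

import Mathlib

open Matrix

noncomputable def grad2 (f : (Fin 2 → ℝ) → ℝ) (x : Fin 2 → ℝ) : Fin 2 → ℝ :=
  fun i => fderiv ℝ f x (Pi.single i 1)

noncomputable def hess2 (f : (Fin 2 → ℝ) → ℝ) (x : Fin 2 → ℝ) : Matrix (Fin 2) (Fin 2) ℝ :=
  Matrix.of fun i j => fderiv ℝ (fun y => fderiv ℝ f y (Pi.single j 1)) x (Pi.single i 1)

lemma affine_fderiv_stmt3 (c a b : ℝ) (y : Fin 2 → ℝ) :
    fderiv ℝ (fun z : Fin 2 → ℝ => c + a * z 0 - b * z 1) y =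
      a • (ContinuousLinearMap.proj 0 : (Fin 2 → ℝ) →L[ℝ] ℝ)
      - b • (ContinuousLinearMap.proj 1 : (Fin 2 → ℝ) →L[ℝ] ℝ) := by
  have h : HasFDerivAt (fun z : Fin 2 → ℝ => c + a * z 0 - b * z 1)
      (a • (ContinuousLinearMap.proj 0 : (Fin 2 → ℝ) →L[ℝ] ℝ)
      - b • (ContinuousLinearMap.proj 1 : (Fin 2 → ℝ) →L[ℝ] ℝ)) y := by
    have h0 : HasFDerivAt (fun z : Fin 2 → ℝ => z 0)
        (ContinuousLinearMap.proj 0 : (Fin 2 → ℝ) →L[ℝ] ℝ) y :=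
      (ContinuousLinearMap.proj 0 : (Fin 2 → ℝ) →L[ℝ] ℝ).hasFDerivAt
    have h1 : HasFDerivAt (fun z : Fin 2 → ℝ => z 1)
        (ContinuousLinearMap.proj 1 : (Fin 2 → ℝ) →L[ℝ] ℝ) y :=
      (ContinuousLinearMap.proj 1 : (Fin 2 → ℝ) →L[ℝ] ℝ).hasFDerivAt
    have := ((hasFDerivAt_const c y).fun_add (h0.const_mul a)).fun_sub (h1.const_mul b)
    simpa using this
  exact h.fderiv

lemma hess2_affine_stmt3 (c a b : ℝ) (x : Fin 2 → ℝ) :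
    hess2 (fun z : Fin 2 → ℝ => c + a * z 0 - b * z 1) x = 0 := by
  ext i j
  show fderiv ℝ (fun y => fderiv ℝ (fun z : Fin 2 → ℝ => c + a * z 0 - b * z 1) y
      (Pi.single j 1)) x (Pi.single i 1) = 0
  have hconst : (fun y : Fin 2 → ℝ => fderiv ℝ (fun z : Fin 2 → ℝ => c + a * z 0 - b * z 1) y
      (Pi.single j 1)) = fun _ => (a • (ContinuousLinearMap.proj 0 : (Fin 2 → ℝ) →L[ℝ] ℝ)
      - b • (ContinuousLinearMap.proj 1 : (Fin 2 → ℝ) →L[ℝ] ℝ)) (Pi.single j 1) := by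
    funext y; rw [affine_fderiv_stmt3]
  rw [hconst, fderiv_fun_const]
  simp

lemma key_stmt3 (R_A k₁ k₂ : ℝ) (hk₁ : k₁ ≠ 0) (hk₂ : k₂ ≠ 0)
    (Sig : Matrix (Fin 2) (Fin 2) ℝ)
    (Γ : Fin 2 → ℝ)
    (K : Matrix (Fin 2) (Fin 2) ℝ) (hK : K = Matrix.diagonal ![k₁, k₂])
    (M : Matrix (Fin 2) (Fin 2) ℝ)
    (hM : M = (1 + (2 * R_A) • (K⁻¹ * K⁻¹ * Sig * Sigᵀ))⁻¹) :
    Γ ⬝ᵥ ((K * K).mulVec (M.mulVec Γ))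
      = (K.mulVec (M.mulVec Γ) ⬝ᵥ K.mulVec (M.mulVec Γ))
        + 2 * R_A * (Sigᵀ.mulVec (M.mulVec Γ) ⬝ᵥ Sigᵀ.mulVec (M.mulVec Γ)) := by
  set N := 1 + (2 * R_A) • (K⁻¹ * K⁻¹ * Sig * Sigᵀ) with hN
  have hKinv : (Matrix.diagonal ![k₁, k₂])⁻¹ = Matrix.diagonal ![k₁⁻¹, k₂⁻¹] := by
    refine Matrix.inv_eq_right_inv ?_
    rw [Matrix.diagonal_mul_diagonal]
    have : (fun i => ![k₁, k₂] i * ![k₁⁻¹, k₂⁻¹] i) = (1 : Fin 2 → ℝ) := by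
      funext i; fin_cases i <;> simp [hk₁, hk₂]
    rw [this]; exact Matrix.diagonal_one
  by_cases hdet : IsUnit N.det
  · have hNM : N * M = 1 := by rw [hM]; exact Matrix.mul_nonsing_inv N hdet
    have hΓeq : N.mulVec (M.mulVec Γ) = Γ := by
      rw [Matrix.mulVec_mulVec, hNM, Matrix.one_mulVec]
    set u := M.mulVec Γ with hu
    have h0 := congrFun hΓeq 0
    have h1 := congrFun hΓeq 1
    simp [hN, hK, hKinv, Matrix.mulVec, Matrix.mul_apply, dotProduct,
      Fin.sum_univ_two, Matrix.one_apply, Matrix.diagonal_apply] at h0 h1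
    simp [hK, Matrix.mulVec, Matrix.mul_apply, dotProduct,
      Fin.sum_univ_two, Matrix.diagonal_apply]
    rw [← h0, ← h1]
    field_simp
    ring
  · have hM0 : M = 0 := by rw [hM]; exact Matrix.nonsing_inv_apply_not_isUnit N hdet
    simp [hM0]

theorem stmt3 (R_A T k₁ k₂ γ₁ γ₂ : ℝ) (hRA : 0 < R_A) (hT : 0 < T)
    (hk₁ : 0 < k₁) (hk₂ : 0 < k₂)
    (hγ₁ : γ₁ ∈ Set.Icc (0 : ℝ) 1) (hγ₂ : γ₂ ∈ Set.Icc (0 : ℝ) 1)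
    (Sig : Matrix (Fin 2) (Fin 2) ℝ) (hSig : IsUnit Sig)
    (Γ : Fin 2 → ℝ) (hΓ : Γ = ![1 + γ₁ - γ₂, 1 + γ₂ - γ₁])
    (K : Matrix (Fin 2) (Fin 2) ℝ) (hK : K = Matrix.diagonal ![k₁, k₂])
    (M : Matrix (Fin 2) (Fin 2) ℝ)
    (hM : M = (1 + (2 * R_A) • (K⁻¹ * K⁻¹ * Sig * Sigᵀ))⁻¹)
    (lamt : ℝ)
    (hlamt : lamt = Γ ⬝ᵥ ((K * K).mulVec (M.mulVec Γ))
      - 5 * R_A / 4 * (Sigᵀ.mulVec (M.mulVec Γ) ⬝ᵥ Sigᵀ.mulVec (M.mulVec Γ))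
      - 3 / 4 * (K.mulVec (M.mulVec Γ) ⬝ᵥ K.mulVec (M.mulVec Γ)))
    (v₁ : ℝ → (Fin 2 → ℝ) → ℝ)
    (hv₁ : ∀ t x, v₁ t x = lamt * (T - t) + (1 + γ₁) * x 0 - γ₁ * x 1) :
    (∀ t ∈ Set.Icc (0 : ℝ) T, ∀ x : Fin 2 → ℝ,
      -(deriv (fun s => v₁ s x) t)
      - 1 / 2 * (Sig * Sigᵀ * hess2 (v₁ t) x).trace
      - 1 / 2 * (Γ ⬝ᵥ ((K * K).mulVec (M.mulVec Γ)))
      + R_A / 4 * (Sigᵀ.mulVec (M.mulVec Γ) ⬝ᵥ Sigᵀ.mulVec (M.mulVec Γ))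
      + 1 / 4 * (K.mulVec (M.mulVec Γ) ⬝ᵥ K.mulVec (M.mulVec Γ)) = 0)
    ∧ ∀ x : Fin 2 → ℝ, v₁ T x = (1 + γ₁) * x 0 - γ₁ * x 1 := by
  have hkey := key_stmt3 R_A k₁ k₂ hk₁.ne' hk₂.ne' Sig Γ K hK M hM
  constructor
  · intro t _ x
    -- time derivative
    have hderiv : deriv (fun s => v₁ s x) t = -lamt := by
      have hfun : (fun s => v₁ s x)
          = fun s => lamt * (T - s) + ((1 + γ₁) * x 0 - γ₁ * x 1) := by
        funext s; rw [hv₁]; ring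
      rw [hfun]
      have h : HasDerivAt (fun s : ℝ => lamt * (T - s) + ((1 + γ₁) * x 0 - γ₁ * x 1))
          (-lamt) t := by
        have h1 : HasDerivAt (fun s : ℝ => T - s) (-1 : ℝ) t := by
          simpa using (hasDerivAt_const t T).fun_sub (hasDerivAt_id t)
        have := (h1.const_mul lamt).add_const ((1 + γ₁) * x 0 - γ₁ * x 1)
        simpa using this
      exact h.deriv
    -- hessian is zero
    have hhess : hess2 (v₁ t) x = 0 := by
      have hfun : v₁ t = fun z : Fin 2 → ℝ => lamt * (T - t) + (1 + γ₁) * z 0 - γ₁ * z 1 := by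
        funext z; rw [hv₁]
      rw [hfun]
      exact hess2_affine_stmt3 (lamt * (T - t)) (1 + γ₁) γ₁ x
    rw [hderiv, hhess, Matrix.mul_zero, Matrix.trace_zero, hlamt]
    rw [hkey]
    ring
  · intro x
    rw [hv₁]
    ring
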